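/- (Spectral gap) Let σ > 0, let n be a nonzero integer, and let λ ∈ ℝ. Suppose (y, h) is a solution of the projected eigensystem with parameters (σ, n, λ) which is nontrivial, i.e. y is not identically zero on [−1, 1] or h ≠ 0. Then λ ≤ −min{σ/2, 1}·n². -/

import Mathlib

open Set
open intervalIntegral

/-- FTC on a subinterval, from `HasDerivWithinAt` on the big interval. -/
lemma ftc_aux {a b : ℝ} {f f' : ℝ → ℝ}
    (hd : ∀ x ∈ Icc a b, HasDerivWithinAt f (f' x) (Icc a b) x)
    (hc' : ContinuousOn f' (Icc a b)) {c : ℝ} (hc : c ∈ Icc a b) :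
    ∫ x in a..c, f' x = f c - f a := by
  apply integral_eq_sub_of_hasDeriv_right_of_le hc.1
  · exact fun x hx => ((hd x ⟨hx.1, hx.2.trans hc.2⟩).continuousWithinAt).mono
      (Icc_subset_Icc le_rfl hc.2)
  · intro x hx
    have hx' : x ∈ Icc a b := ⟨hx.1.le, hx.2.le.trans hc.2⟩
    refine (hd x hx').mono_of_mem_nhdsWithin ?_
    refine Filter.mem_of_superset (Ioc_mem_nhdsGT (hx.2.trans_le hc.2)) ?_
    exact fun t ht => ⟨hx'.1.trans ht.1.le, ht.2⟩
  · exact ((hc'.mono (Icc_subset_Icc le_rfl hc.2)).intervalIntegrable_of_Icc hc.1)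

/-- Cauchy–Schwarz (via expanding a square). -/
lemma cs_aux {a b : ℝ} (hab : a < b) {g : ℝ → ℝ} (hg : ContinuousOn g (Icc a b)) :
    (∫ x in a..b, g x)^2 ≤ (b - a) * ∫ x in a..b, (g x)^2 := by
  set J := ∫ x in a..b, g x with hJ
  set Q := ∫ x in a..b, (g x)^2 with hQ
  set c : ℝ := J / (b - a) with hcdef
  have hba : 0 < b - a := by linarith
  have hcJ : (b - a) * c = J := by rw [hcdef]; field_simp [hba.ne']
  have hgi : IntervalIntegrable g MeasureTheory.volume a b :=
    hg.intervalIntegrable_of_Icc hab.le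
  have hg2i : IntervalIntegrable (fun x => (g x)^2) MeasureTheory.volume a b :=
    (hg.pow 2).intervalIntegrable_of_Icc hab.le
  have hcgi : IntervalIntegrable (fun x => (2*c) * g x) MeasureTheory.volume a b :=
    hgi.const_mul _
  have key : (0:ℝ) ≤ Q - 2*c*J + (b - a) * c^2 := by
    have h0 : (0:ℝ) ≤ ∫ x in a..b, (g x - c)^2 :=
      integral_nonneg hab.le (fun u _ => sq_nonneg _)
    have e : ∀ x : ℝ, (g x - c)^2 = (g x)^2 - (2*c) * g x + c^2 := fun x => by ring
    have : (∫ x in a..b, (g x - c)^2)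
        = Q - 2*c*J + (b - a) * c^2 := by
      simp only [e]
      rw [integral_add (hg2i.sub hcgi) intervalIntegrable_const,
        integral_sub hg2i hcgi, integral_const_mul, integral_const]
      simp [hJ, hQ, smul_eq_mul]
    linarith [this ▸ h0]
  nlinarith [key, hcJ, hba, sq_nonneg c]

set_option maxHeartbeats 1600000 in
/-- Spectral gap: if `σ > 0`, `n ≠ 0` and `(y, h)` is a nontrivial solution of the projected
eigensystem `λ·y - y'' + n²·y = 0` on `[-1,1]`, `λ·h = y'(1)`, `y(-1) = 0`, `y(1) = -σ·n²·h`,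
then `λ ≤ -min(σ/2, 1)·n²`. -/
theorem stmt1 (σ : ℝ) (hσ : 0 < σ) (n : ℤ) (hn : n ≠ 0) (lam : ℝ)
    (y y' y'' : ℝ → ℝ) (h : ℝ)
    (hy' : ∀ x ∈ Icc (-1:ℝ) 1, HasDerivWithinAt y (y' x) (Icc (-1:ℝ) 1) x)
    (hy'' : ∀ x ∈ Icc (-1:ℝ) 1, HasDerivWithinAt y' (y'' x) (Icc (-1:ℝ) 1) x)
    (hcont : ContinuousOn y'' (Icc (-1:ℝ) 1))
    (heq : ∀ x ∈ Icc (-1:ℝ) 1, lam * y x - y'' x + (n:ℝ)^2 * y x = 0)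
    (hbc : lam * h = y' 1)
    (hbot : y (-1) = 0)
    (htop : y 1 = -σ * (n:ℝ)^2 * h)
    (hnontriv : (¬ ∀ x ∈ Icc (-1:ℝ) 1, y x = 0) ∨ h ≠ 0) :
    lam ≤ -min (σ/2) 1 * (n:ℝ)^2 := by
  by_contra hcon
  push_neg at hcon
  -- basic facts
  have hab : (-1:ℝ) ≤ 1 := by norm_num
  have hN2 : (1:ℝ) ≤ (n:ℝ)^2 := by
    have h1 : (1:ℤ) ≤ n^2 := by
      have h2 := Int.one_le_abs hn
      calc (1:ℤ) = 1^2 := by norm_num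
        _ ≤ |n|^2 := by gcongr <;> norm_num
        _ = n^2 := sq_abs n
    exact_mod_cast h1
  set N2 : ℝ := (n:ℝ)^2 with hN2def
  have hN2pos : (0:ℝ) < N2 := by linarith only [hN2]
  have hσN : 0 < σ * N2 := mul_pos hσ hN2pos
  have hmin1 : min (σ/2) 1 ≤ 1 := min_le_right _ _
  have hminσ : min (σ/2) 1 ≤ σ/2 := min_le_left _ _
  have hmm1 : min (σ/2) 1 * N2 ≤ 1 * N2 :=
    mul_le_mul_of_nonneg_right hmin1 hN2pos.le
  have hmm2 : min (σ/2) 1 * N2 ≤ (σ/2) * N2 :=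
    mul_le_mul_of_nonneg_right hminσ hN2pos.le
  have hμ : 0 < lam + N2 := by linarith only [hcon, hmm1]
  have hlam2 : -lam < (σ/2) * N2 := by linarith only [hcon, hmm2]
  -- continuity
  have hyc : ContinuousOn y (Icc (-1:ℝ) 1) := fun x hx => (hy' x hx).continuousWithinAt
  have hy'c : ContinuousOn y' (Icc (-1:ℝ) 1) := fun x hx => (hy'' x hx).continuousWithinAt
  -- integrabilities
  have hi2 : IntervalIntegrable (fun t => (y' t)^2) MeasureTheory.volume (-1) 1 :=
    (hy'c.pow 2).intervalIntegrable_of_Icc hab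
  have hi1 : IntervalIntegrable (fun t => (lam + N2) * (y t)^2) MeasureTheory.volume (-1) 1 :=
    ((hyc.pow 2).intervalIntegrable_of_Icc hab).const_mul _
  set I1 : ℝ := ∫ t in (-1:ℝ)..1, (y t)^2 with hI1def
  set I2 : ℝ := ∫ t in (-1:ℝ)..1, (y' t)^2 with hI2def
  have hI1nn : 0 ≤ I1 := integral_nonneg hab (fun u _ => sq_nonneg _)
  have hI2nn : 0 ≤ I2 := integral_nonneg hab (fun u _ => sq_nonneg _)
  -- energy identity
  have hF : ∀ x ∈ Icc (-1:ℝ) 1, HasDerivWithinAt (fun t => y t * y' t)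
      (y' x * y' x + y x * y'' x) (Icc (-1:ℝ) 1) x := by
    intro x hx
    exact (hy' x hx).mul (hy'' x hx)
  have hFc : ContinuousOn (fun x => y' x * y' x + y x * y'' x) (Icc (-1:ℝ) 1) :=
    (hy'c.mul hy'c).add (hyc.mul hcont)
  have hE0 : ∫ x in (-1:ℝ)..1, (y' x * y' x + y x * y'' x) = y 1 * y' 1 := by
    have := ftc_aux hF hFc (c := 1) (by norm_num)
    simpa [hbot] using this
  have hcongr : ∫ x in (-1:ℝ)..1, (y' x * y' x + y x * y'' x)
      = ∫ x in (-1:ℝ)..1, ((y' x)^2 + (lam + N2) * (y x)^2) := by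
    apply integral_congr
    intro x hx
    rw [uIcc_of_le hab] at hx
    have h'' : y'' x = (lam + N2) * y x := by linear_combination (-1 : ℝ) * heq x hx
    show y' x * y' x + y x * y'' x = (y' x)^2 + (lam + N2) * (y x)^2
    rw [h'']
    ring
  have hsplit : ∫ x in (-1:ℝ)..1, ((y' x)^2 + (lam + N2) * (y x)^2)
      = I2 + (lam + N2) * I1 := by
    rw [integral_add hi2 hi1, integral_const_mul]
  have energy : I2 + (lam + N2) * I1 = y 1 * y' 1 := by
    rw [← hsplit, ← hcongr, hE0]
  -- FTC for y
  have hy1 : ∫ t in (-1:ℝ)..1, y' t = y 1 := by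
    have := ftc_aux hy' hy'c (c := 1) (by norm_num)
    simpa [hbot] using this
  -- Cauchy-Schwarz on the full interval
  have hCS : (y 1)^2 ≤ 2 * I2 := by
    have := cs_aux (by norm_num : (-1:ℝ) < 1) hy'c
    rw [hy1] at this
    linarith [this]
  -- rewrite RHS of energy
  set K : ℝ := -lam / (σ * N2) with hKdef
  have hrhs : y 1 * y' 1 = K * (y 1)^2 := by
    rw [← hbc, htop, hKdef]
    field_simp
  have hK : K < 1/2 := by
    rw [hKdef, div_lt_iff₀ hσN]
    linarith only [hlam2]
  set K' : ℝ := max K 0 with hK'def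
  have hK'0 : 0 ≤ K' := le_max_right _ _
  have hK'lt : K' < 1/2 := max_lt hK (by norm_num)
  have hchain : I2 + (lam + N2) * I1 ≤ K' * (2 * I2) := by
    calc I2 + (lam + N2) * I1 = K * (y 1)^2 := by rw [energy, hrhs]
      _ ≤ K' * (y 1)^2 := mul_le_mul_of_nonneg_right (le_max_left _ _) (sq_nonneg _)
      _ ≤ K' * (2 * I2) := mul_le_mul_of_nonneg_left hCS hK'0
  have hμI1 : 0 ≤ (lam + N2) * I1 := mul_nonneg hμ.le hI1nn
  have hprod : (1 - 2*K') * I2 ≤ 0 := by linarith only [hchain, hμI1]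
  have hI2z : I2 = 0 := by
    refine le_antisymm ?_ hI2nn
    by_contra hpos
    push_neg at hpos
    have hp := mul_pos (by linarith only [hK'lt] : (0:ℝ) < 1 - 2*K') hpos
    linarith only [hp, hprod]
  have hI1z : I1 = 0 := by
    refine le_antisymm ?_ hI1nn
    by_contra hpos
    push_neg at hpos
    have hp := mul_pos hμ hpos
    have h2 := hchain
    rw [hI2z] at h2
    linarith only [hp, h2]
  -- y 1 = 0 and h = 0
  have hy1z : y 1 = 0 := by
    have hsq : (y 1)^2 = 0 :=
      le_antisymm (by linarith only [hCS, hI2z]) (sq_nonneg _)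
    exact pow_eq_zero_iff (by norm_num : (2:ℕ) ≠ 0) |>.mp hsq
  have hhz : h = 0 := by
    rw [htop] at hy1z
    have : σ * N2 * h = 0 := by rw [hN2def] at *; linarith [hy1z]
    rcases mul_eq_zero.mp this with h1 | h2
    · exact absurd h1 (ne_of_gt hσN)
    · exact h2
  -- y vanishes on Icc
  have hyz : ∀ x ∈ Icc (-1:ℝ) 1, y x = 0 := by
    intro x hx
    rcases eq_or_lt_of_le hx.1 with hxe | hxlt
    · rw [← hxe]; exact hbot
    · have hftc : ∫ t in (-1:ℝ)..x, y' t = y x := by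
        have := ftc_aux hy' hy'c (c := x) hx
        simpa [hbot] using this
      have hcsx : (y x)^2 ≤ (x - (-1)) * ∫ t in (-1:ℝ)..x, (y' t)^2 := by
        have := cs_aux hxlt (hy'c.mono (Icc_subset_Icc le_rfl hx.2))
        rwa [hftc] at this
      have hintx : IntervalIntegrable (fun t => (y' t)^2) MeasureTheory.volume (-1) x :=
        ((hy'c.pow 2).mono (Icc_subset_Icc le_rfl hx.2)).intervalIntegrable_of_Icc hx.1
      have hintx' : IntervalIntegrable (fun t => (y' t)^2) MeasureTheory.volume x 1 :=
        ((hy'c.pow 2).mono (Icc_subset_Icc hx.1 le_rfl)).intervalIntegrable_of_Icc hx.2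
      have hadd : (∫ t in (-1:ℝ)..x, (y' t)^2) + ∫ t in x..1, (y' t)^2 = I2 :=
        integral_add_adjacent_intervals hintx hintx'
      have hn1 : 0 ≤ ∫ t in x..1, (y' t)^2 := integral_nonneg hx.2 (fun u _ => sq_nonneg _)
      have hle : (∫ t in (-1:ℝ)..x, (y' t)^2) ≤ 0 := by linarith [hadd, hn1, hI2z.le]
      have hx1 : (0:ℝ) ≤ x - (-1) := by linarith only [hxlt]
      have hmul : (x - (-1)) * (∫ t in (-1:ℝ)..x, (y' t)^2) ≤ 0 :=
        mul_nonpos_of_nonneg_of_nonpos hx1 hle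
      have hsq : (y x)^2 = 0 :=
        le_antisymm (by linarith only [hcsx, hmul]) (sq_nonneg _)
      exact pow_eq_zero_iff (by norm_num : (2:ℕ) ≠ 0) |>.mp hsq
  rcases hnontriv with hc | hc
  · exact hc hyz
  · exact hc hhz
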